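/- Let n be a unit timelike vector field on a Lorentzian manifold with ∇_X n = τ X for all X orthogonal to n (umbilicity), let V = α n + U be a conformal vector field (£_V g = 2ψ g) with U orthogonal to n. Then for all X, Y orthogonal to n, (£_U g)(X, Y) = 2(ψ - α τ) g(X, Y); in particular U restricts to a conformal vector field on the orthogonal distribution with scale function ψ - ατ. -/
import Mathlib


/-- Eq. (28): if `n` is a unit timelike vector field with umbilicity
`∇_X n = τ X` for `X ⊥ n`, and `V = α n + U` is conformal (`£_V g = 2ψ g`)
with `U ⊥ n`, then for all `X, Y ⊥ n` one has
`(£_U g)(X,Y) = 2(ψ - ατ) g(X,Y)`: `U` is conformal on the slices. -/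
theorem stmt_10 {F V : Type*} [CommRing F] [AddCommGroup V] [Module F V]
    (g : V → V → F) (d : V → F → F) (D : V → V → V) (bracket : V → V → V)
    (hg_symm : ∀ X Y, g X Y = g Y X)
    (hg_add : ∀ X Y Z, g (X + Y) Z = g X Z + g Y Z)
    (hg_smul : ∀ (f : F) (X Y : V), g (f • X) Y = f * g X Y)
    (hd_add : ∀ (X : V) (a b : F), d X (a + b) = d X a + d X b)
    (hd_mul : ∀ (X : V) (a b : F), d X (a * b) = d X a * b + a * d X b)
    (hD_addR : ∀ X Y Z, D X (Y + Z) = D X Y + D X Z)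
    (hD_leib : ∀ (X : V) (f : F) (Y : V), D X (f • Y) = d X f • Y + f • D X Y)
    (hcompat : ∀ X Y Z, d X (g Y Z) = g (D X Y) Z + g Y (D X Z))
    (htorsion : ∀ X Y, bracket X Y = D X Y - D Y X)
    (n U : V) (α ψ τ : F)
    (hn : g n n = -1) (hU : g U n = 0)
    (humb : ∀ X, g X n = 0 → D X n = τ • X)
    (hconf : ∀ X Y, d (α • n + U) (g X Y) - g (bracket (α • n + U) X) Y
        - g X (bracket (α • n + U) Y) = 2 * ψ * g X Y) :
    ∀ X Y, g X n = 0 → g Y n = 0 →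
      d U (g X Y) - g (bracket U X) Y - g X (bracket U Y)
        = 2 * (ψ - α * τ) * g X Y := by
  have hg_sub : ∀ X Y Z, g (X - Y) Z = g X Z - g Y Z := by
    intro X Y Z
    have : X - Y = X + (-1 : F) • Y := by
      rw [neg_one_smul]; abel
    rw [this, hg_add, hg_smul]; ring
  have key : ∀ W X Y, d W (g X Y) - g (bracket W X) Y - g X (bracket W Y)
      = g (D X W) Y + g X (D Y W) := by
    intro W X Y
    rw [htorsion, htorsion, hcompat, hg_sub,
      hg_symm X (D W Y - D Y W), hg_sub, hg_symm (D W Y) X, hg_symm (D Y W) X]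
    ring
  intro X Y hX hY
  have hnY : g n Y = 0 := by rw [hg_symm]; exact hY
  have hnX : g n X = 0 := by rw [hg_symm]; exact hX
  have h1 := hconf X Y
  rw [key] at h1
  have hDX : D X (α • n + U) = d X α • n + α • (τ • X) + D X U := by
    rw [hD_addR, hD_leib, humb X hX]
  have hDY : D Y (α • n + U) = d Y α • n + α • (τ • Y) + D Y U := by
    rw [hD_addR, hD_leib, humb Y hY]
  rw [hDX, hDY, hg_add, hg_add, hg_smul, hg_smul, hg_smul, hnY,
    hg_symm X (d Y α • n + α • (τ • Y) + D Y U), hg_add, hg_add,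
    hg_smul, hg_smul, hg_smul, hnX, hg_symm Y X, hg_symm (D Y U) X] at h1
  rw [key]
  linear_combination h1
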